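/- Let F = f_1 ≥ f_2 ≥ … ≥ f_n be the (decreasingly ordered) coordinatewise sum of k tree degree sequences on n vertices. Then for every index s with 2k ≤ s ≤ n, the Erdős–Gallai inequality holds: ∑_{i=1}^{s} f_i ≤ s(s−1) + ∑_{j=s+1}^{n} min{s, f_j}. -/

import Mathlib

/-- `d` is a tree degree sequence on `n` vertices: all degrees are positive and
they sum to `2n - 2`. -/
def TreeDegSeq {n : ℕ} (d : Fin n → ℕ) : Prop :=
  (∀ v, 1 ≤ d v) ∧ (∑ v, d v) + 2 = 2 * n

/-- Let `F = f 0 ≥ f 1 ≥ … ≥ f (n-1)` be the decreasingly ordered coordinatewise sum of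
`k` tree degree sequences on `n` vertices. Then for every `s` with `2k ≤ s ≤ n`, the
Erdős–Gallai inequality `∑_{i<s} f i ≤ s(s-1) + ∑_{j≥s} min s (f j)` holds. -/
theorem eg_inequality_for_large_s {k n : ℕ} (D : Fin k → Fin n → ℕ)
    (hD : ∀ i, TreeDegSeq (D i)) (f : Fin n → ℕ)
    (hsorted : ∀ i j : Fin n, i ≤ j → f j ≤ f i)
    (hperm : ∃ σ : Equiv.Perm (Fin n), ∀ v, f v = ∑ i, D i (σ v))
    (s : ℕ) (hs1 : 2 * k ≤ s) (hs2 : s ≤ n) :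
    ∑ i ∈ Finset.univ.filter (fun i : Fin n => (i : ℕ) < s), f i ≤
      s * (s - 1) + ∑ j ∈ Finset.univ.filter (fun j : Fin n => s ≤ (j : ℕ)), min s (f j) := by
  classical
  obtain ⟨σ, hσ⟩ := hperm
  -- every f v is at least k
  have hfk : ∀ v, k ≤ f v := by
    intro v
    rw [hσ]
    calc k = ∑ _i : Fin k, 1 := by simp
    _ ≤ _ := Finset.sum_le_sum fun i _ => (hD i).1 (σ v)
  -- total sum
  have htot : (∑ v, f v) + 2 * k = 2 * k * n := by
    have h1 : ∑ v, f v = ∑ i : Fin k, ∑ v, D i v := by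
      simp_rw [hσ]
      rw [Finset.sum_comm]
      exact Finset.sum_congr rfl fun i _ => Equiv.sum_comp σ (D i)
    calc (∑ v, f v) + 2 * k = ∑ i : Fin k, ((∑ v, D i v) + 2) := by
          rw [h1, Finset.sum_add_distrib]; simp [mul_comm]
      _ = ∑ _i : Fin k, 2 * n := Finset.sum_congr rfl fun i _ => (hD i).2
      _ = 2 * k * n := by simp; ring
  set T := Finset.univ.filter (fun j : Fin n => s ≤ (j : ℕ)) with hT
  set S := Finset.univ.filter (fun i : Fin n => (i : ℕ) < s) with hS
  -- card of T
  have hcardT : T.card = n - s := by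
    rw [hT, Finset.card_filter]
    rw [Fin.sum_univ_eq_sum_range (fun j => if s ≤ j then 1 else 0) n]
    rw [← Finset.card_filter]
    rw [Finset.range_eq_Ico, Finset.Ico_filter_le, Nat.card_Ico]
    simp
  -- partition of the total sum
  have hsplit : (∑ i ∈ S, f i) + (∑ j ∈ T, f j) = ∑ v, f v := by
    rw [hS, hT]
    rw [← Finset.sum_filter_add_sum_filter_not Finset.univ (fun i : Fin n => (i : ℕ) < s) f]
    congr 1
    apply Finset.sum_congr _ fun _ _ => rfl
    apply Finset.filter_congr
    intro x _
    simp [not_lt]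
  have hTf : (n - s) * k ≤ ∑ j ∈ T, f j := by
    calc (n - s) * k = T.card * k := by rw [hcardT]
      _ = T.card • k := (smul_eq_mul _ _).symm
      _ ≤ ∑ j ∈ T, f j := Finset.card_nsmul_le_sum T f k fun v _ => hfk v
  have hTmin : (n - s) * k ≤ ∑ j ∈ T, min s (f j) := by
    calc (n - s) * k = T.card * k := by rw [hcardT]
      _ = T.card • k := (smul_eq_mul _ _).symm
      _ ≤ ∑ j ∈ T, min s (f j) :=
          Finset.card_nsmul_le_sum T _ k fun v _ =>
            le_min (le_trans (by omega) hs1) (hfk v)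
  -- final arithmetic
  obtain ⟨b, hb⟩ : ∃ b, n = s + b := ⟨n - s, by omega⟩
  have key : (∑ i ∈ S, f i) + (∑ j ∈ T, f j) + 2 * k = 2 * k * (s + b) := by
    rw [hsplit, htot, hb]
  have hns : n - s = b := by omega
  rw [hns] at hTf hTmin
  rcases Nat.eq_zero_or_pos s with hs0 | hs0
  · have hk0 : k = 0 := by omega
    have : ∑ i ∈ S, f i = 0 := by
      subst hk0
      simp only [Nat.mul_zero, Nat.zero_mul] at key
      omega
    omega
  · obtain ⟨c, hc⟩ : ∃ c, s = c + 1 := ⟨s - 1, by omega⟩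
    subst hc
    simp only [Nat.add_sub_cancel]
    have h2k : 2 * k ≤ c + 1 := hs1
    nlinarith [hTmin, hTf, key, Nat.mul_le_mul_right c h2k]
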